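/- Let X be a Lindelöf topological space with a point-𝔠 base. Then the weight of X satisfies w(X) ≤ 𝔠. -/

import Mathlib

open Set Cardinal Topology

universe u v

/-- A space is quasi-Lindelöf if every open cover has a countable subcover
(no separation axioms assumed). -/
def QuasiLindelofSp (X : Type u) [TopologicalSpace X] : Prop :=
  ∀ 𝒰 : Set (Set X), (∀ U ∈ 𝒰, IsOpen U) → ⋃₀ 𝒰 = Set.univ →
    ∃ 𝒱 ⊆ 𝒰, 𝒱.Countable ∧ ⋃₀ 𝒱 = Set.univ

/-- Lindelöf in the sense of Engelking: regular (T3, including T1) and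
every open cover has a countable subcover. -/
def EngLindelofSp (X : Type u) [TopologicalSpace X] : Prop :=
  RegularSpace X ∧ T1Space X ∧ QuasiLindelofSp X

/-- X is productively Lindelöf if X × Y is Lindelöf for every Lindelöf space Y. -/
def ProductivelyLindelofSp (X : Type u) [TopologicalSpace X] : Prop :=
  ∀ (Y : Type u) [TopologicalSpace Y], EngLindelofSp Y → EngLindelofSp (X × Y)

/-- X is productively quasi-Lindelöf if X × Y is quasi-Lindelöf for every Lindelöf space Y. -/
def ProductivelyQuasiLindelofSp (X : Type u) [TopologicalSpace X] : Prop :=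
  ∀ (Y : Type u) [TopologicalSpace Y], EngLindelofSp Y → QuasiLindelofSp (X × Y)

/-- X is powerfully Lindelöf if X^ω is Lindelöf. -/
def PowerfullyLindelofSp (X : Type u) [TopologicalSpace X] : Prop :=
  EngLindelofSp (ℕ → X)

/-- X is powerfully quasi-Lindelöf if X^ω is quasi-Lindelöf. -/
def PowerfullyQuasiLindelofSp (X : Type u) [TopologicalSpace X] : Prop :=
  QuasiLindelofSp (ℕ → X)

/-- Tightness of X is at most κ. -/
def TightnessLE (X : Type u) [TopologicalSpace X] (κ : Cardinal.{u}) : Prop :=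
  ∀ (A : Set X) (x : X), x ∈ closure A → ∃ B ⊆ A, #B ≤ κ ∧ x ∈ closure B

/-- X has countable tightness. -/
def CountableTightness (X : Type u) [TopologicalSpace X] : Prop :=
  ∀ (A : Set X) (x : X), x ∈ closure A → ∃ B ⊆ A, B.Countable ∧ x ∈ closure B

/-- The Lindelöf number of X is at most κ: every open cover has a subcover of size ≤ κ. -/
def LindelofNumberLE (X : Type u) [TopologicalSpace X] (κ : Cardinal.{u}) : Prop :=
  ∀ 𝒰 : Set (Set X), (∀ U ∈ 𝒰, IsOpen U) → ⋃₀ 𝒰 = Set.univ →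
    ∃ 𝒱 ⊆ 𝒰, #𝒱 ≤ κ ∧ ⋃₀ 𝒱 = Set.univ

/-- The weight of X is at most κ: there is a base of size ≤ κ. -/
def WeightLE (X : Type u) [TopologicalSpace X] (κ : Cardinal.{u}) : Prop :=
  ∃ B : Set (Set X), TopologicalSpace.IsTopologicalBasis B ∧ #B ≤ κ

/-- N is a network for X. -/
def IsNetwork (X : Type u) [TopologicalSpace X] (N : Set (Set X)) : Prop :=
  ∀ (x : X) (U : Set X), IsOpen U → x ∈ U → ∃ n ∈ N, x ∈ n ∧ n ⊆ U

/-- X is linearly Lindelöf: regular (incl. T1) and every open cover linearly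
ordered by inclusion has a countable subcover. -/
def LinearlyLindelofSp (X : Type u) [TopologicalSpace X] : Prop :=
  RegularSpace X ∧ T1Space X ∧
    ∀ 𝒰 : Set (Set X), (∀ U ∈ 𝒰, IsOpen U) → IsChain (· ⊆ ·) 𝒰 → ⋃₀ 𝒰 = Set.univ →
      ∃ 𝒱 ⊆ 𝒰, 𝒱.Countable ∧ ⋃₀ 𝒱 = Set.univ

/-- U ⊆ X^ω is a basic open set: a product of open sets, all but finitely many of
which equal X. -/
def IsBasicOpen (X : Type u) [TopologicalSpace X] (U : Set (ℕ → X)) : Prop :=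
  ∃ V : ℕ → Set X, (∀ i, IsOpen (V i)) ∧ {i | V i ≠ Set.univ}.Finite ∧
    U = Set.pi Set.univ V

/-- A family of subsets of Z is point-κ if every point belongs to at most κ members. -/
def PointLE {Z : Type u} (𝒲 : Set (Set Z)) (κ : Cardinal.{u}) : Prop :=
  ∀ z : Z, #({W ∈ 𝒲 | z ∈ W}) ≤ κ

/-- A non-empty space is zero-dimensional if it is T1 and has a base of clopen sets. -/
def ZeroDimensionalSp (Y : Type u) [TopologicalSpace Y] : Prop :=
  Nonempty Y ∧ T1Space Y ∧
    ∃ B : Set (Set Y), TopologicalSpace.IsTopologicalBasis B ∧ ∀ b ∈ B, IsClopen b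

namespace Stmt17Aux

theorem mk_iUnion_le'' {α ι : Type u} (f : ι → Set α) {c : Cardinal.{u}}
    (h : ∀ i, #(f i) ≤ c) : #(⋃ i, f i) ≤ #ι * c :=
  (Cardinal.mk_iUnion_le f).trans (mul_le_mul_right (ciSup_le' h) _)

theorem countable_Iio (t : (ℵ₁ : Cardinal.{u}).ord.ToType) : (Set.Iio t).Countable := by
  set e := (Ordinal.ToType.mk (o := (ℵ₁ : Cardinal.{u}).ord)) with he
  set β : Ordinal.{u} := (e.symm t).1 with hβ
  have hβc : β.card ≤ ℵ₀ := by
    have h2 : β.card < (ℵ₁ : Cardinal.{u}) := Cardinal.lt_ord.1 (Set.mem_Iio.1 (e.symm t).2)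
    rw [← Cardinal.succ_aleph0] at h2
    exact Order.lt_succ_iff.1 h2
  haveI : Countable β.ToType := by
    rw [← Cardinal.mk_le_aleph0_iff, Cardinal.mk_toType]; exact hβc
  rw [← Set.countable_coe_iff]
  have key : ∀ s : (Set.Iio t), ((e.symm s.1).1) < β := by
    intro s
    have h1 : e.symm s.1 < e.symm t := (OrderIso.lt_iff_lt _).2 s.2
    exact Subtype.coe_lt_coe.2 h1
  refine Function.Injective.countable
    (f := fun s : (Set.Iio t) => (Ordinal.ToType.mk (o := β)) ⟨(e.symm s.1).1, key s⟩) ?_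
  intro a b hab
  have h2 := (Ordinal.ToType.mk (o := β)).injective hab
  have h4 := Subtype.mk_eq_mk.1 h2
  have h3 : (e.symm a.1) = (e.symm b.1) := Subtype.ext h4
  exact Subtype.ext (e.symm.injective h3)

theorem exists_ub {A : Set ((ℵ₁ : Cardinal.{u}).ord.ToType)} (hA : A.Countable) :
    ∃ t, ∀ a ∈ A, a < t := by
  by_contra h
  push_neg at h
  have hcov : (Set.univ : Set ((ℵ₁ : Cardinal.{u}).ord.ToType)) ⊆ ⋃ a ∈ A, Set.Iic a := by
    intro t _
    obtain ⟨a, haA, hta⟩ := h t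
    exact Set.mem_biUnion haA hta
  have hc : (Set.univ : Set ((ℵ₁ : Cardinal.{u}).ord.ToType)).Countable :=
    Set.Countable.mono hcov (hA.biUnion fun a _ => by
      rw [← Set.Iio_union_right]
      exact (countable_Iio a).union (Set.countable_singleton a))
  haveI := Set.countable_univ_iff.1 hc
  have hmk : #((ℵ₁ : Cardinal.{u}).ord.ToType) ≤ ℵ₀ := Cardinal.mk_le_aleph0
  rw [Cardinal.mk_toType, Cardinal.card_ord] at hmk
  exact absurd hmk (not_le.2 Cardinal.aleph0_lt_aleph_one)

variable {X : Type u} [TopologicalSpace X]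

def bad (B : Set (Set X)) (D : Set X) : Set (Set (Set X)) :=
  {C | C ⊆ B ∧ C.Countable ∧ (∀ W ∈ C, (W ∩ D).Nonempty) ∧ ⋃₀ C ≠ Set.univ}

noncomputable def wit [Nonempty X] (C : Set (Set X)) : X :=
  @dite X (∃ y, y ∉ ⋃₀ C) (Classical.dec _) (fun h => h.choose) (fun _ => Classical.arbitrary X)

theorem wit_not_mem [Nonempty X] {C : Set (Set X)} (h : ⋃₀ C ≠ Set.univ) :
    wit C ∉ ⋃₀ C := by
  obtain ⟨y, hy⟩ := (Set.ne_univ_iff_exists_notMem _).1 h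
  have h' : ∃ y, y ∉ ⋃₀ C := ⟨y, hy⟩
  rw [wit, dif_pos h']
  exact h'.choose_spec

noncomputable def step [Nonempty X] (B : Set (Set X)) (D : Set X) : Set X :=
  D ∪ wit '' bad B D

noncomputable def stage [Nonempty X] (B : Set (Set X)) :
    (ℵ₁ : Cardinal.{u}).ord.ToType → Set X :=
  wellFounded_lt.fix (fun t ih => step B (⋃ s : {s // s < t}, ih s.1 s.2))

theorem stage_eq [Nonempty X] (B : Set (Set X)) (t : (ℵ₁ : Cardinal.{u}).ord.ToType) :
    stage B t = step B (⋃ s : {s // s < t}, stage B s.1) := by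
  unfold stage
  exact WellFounded.fix_eq _ _ _

theorem mk_meets_le {B : Set (Set X)} (hBp : PointLE B Cardinal.continuum) {D : Set X}
    (hD : #D ≤ Cardinal.continuum) :
    #({W ∈ B | (W ∩ D).Nonempty}) ≤ Cardinal.continuum := by
  have hsub : {W ∈ B | (W ∩ D).Nonempty} ⊆ ⋃ d : D, {W ∈ B | (d : X) ∈ W} := by
    rintro W ⟨hWB, d, hdW, hdD⟩
    exact Set.mem_iUnion.2 ⟨⟨d, hdD⟩, hWB, hdW⟩
  refine (Cardinal.mk_le_mk_of_subset hsub).trans ?_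
  refine (mk_iUnion_le'' (fun d : D => {W ∈ B | (d : X) ∈ W}) (fun d => hBp d)).trans ?_
  calc #D * 𝔠 ≤ 𝔠 * 𝔠 := mul_le_mul_left hD _
    _ = 𝔠 := Cardinal.mul_eq_self Cardinal.aleph0_le_continuum

theorem mk_bad_le {B : Set (Set X)} (hBp : PointLE B 𝔠) {D : Set X} (hD : #D ≤ 𝔠) :
    #(bad B D) ≤ 𝔠 := by
  set S := {W ∈ B | (W ∩ D).Nonempty} with hS
  have h1 : bad B D ⊆ {C | C ⊆ S ∧ C.Countable} := by
    rintro C ⟨hCB, hCc, hCm, -⟩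
    exact ⟨fun W hW => ⟨hCB hW, hCm W hW⟩, hCc⟩
  refine (Cardinal.mk_le_mk_of_subset h1).trans ?_
  have h2 : #({C : Set (Set X) | C ⊆ S ∧ C.Countable}) =
      #{C : Set (Set X) // C ⊆ S ∧ #C ≤ ℵ₀} :=
    Cardinal.mk_congr (Equiv.subtypeEquivRight fun C =>
      and_congr_right fun _ => Cardinal.le_aleph0_iff_set_countable.symm)
  rw [h2]
  refine (Cardinal.mk_bounded_subset_le S ℵ₀).trans ?_
  calc max #S ℵ₀ ^ (ℵ₀ : Cardinal.{u}) ≤ 𝔠 ^ (ℵ₀ : Cardinal.{u}) :=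
        Cardinal.power_le_power_right (max_le (mk_meets_le hBp hD) Cardinal.aleph0_le_continuum)
    _ = 𝔠 := Cardinal.continuum_power_aleph0

theorem mk_step_le [Nonempty X] {B : Set (Set X)} (hBp : PointLE B 𝔠) {D : Set X}
    (hD : #D ≤ 𝔠) : #(step B D) ≤ 𝔠 := by
  refine (Cardinal.mk_union_le _ _).trans ?_
  have h1 : #(wit '' bad B D) ≤ 𝔠 := Cardinal.mk_image_le.trans (mk_bad_le hBp hD)
  calc #D + #(wit '' bad B D) ≤ 𝔠 + 𝔠 := add_le_add hD h1
    _ = 𝔠 := Cardinal.add_eq_self Cardinal.aleph0_le_continuum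

theorem mk_stage_le [Nonempty X] {B : Set (Set X)} (hBp : PointLE B 𝔠)
    (t : (ℵ₁ : Cardinal.{u}).ord.ToType) : #(stage B t) ≤ 𝔠 := by
  refine wellFounded_lt.induction (C := fun t => #(stage B t) ≤ 𝔠) t ?_
  intro t ih
  rw [stage_eq]
  refine mk_step_le hBp ?_
  have h1 : #(⋃ s : {s // s < t}, stage B s.1) ≤ #{s // s < t} * 𝔠 :=
    mk_iUnion_le'' _ fun s => ih s.1 s.2
  have h2 : #{s // s < t} ≤ 𝔠 := by
    have hc : (Set.Iio t).Countable := countable_Iio t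
    exact (Cardinal.le_aleph0_iff_set_countable.2 hc).trans Cardinal.aleph0_le_continuum
  refine h1.trans ?_
  calc #{s // s < t} * 𝔠 ≤ 𝔠 * 𝔠 := mul_le_mul_left h2 _
    _ = 𝔠 := Cardinal.mul_eq_self Cardinal.aleph0_le_continuum

theorem sep_point [RegularSpace X] [T1Space X] {x y : X} (h : y ≠ x) :
    ∃ O : Set X, IsOpen O ∧ y ∈ O ∧ x ∉ closure O := by
  have hx : {x}ᶜ ∈ nhds y := isOpen_compl_singleton.mem_nhds (by simp [h])
  obtain ⟨V, hV, hVc, hVs⟩ := exists_mem_nhds_isClosed_subset hx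
  refine ⟨interior V, isOpen_interior, mem_interior_iff_mem_nhds.2 hV, fun hc => ?_⟩
  exact hVs (closure_minimal interior_subset hVc hc) rfl



theorem dense_stages [Nonempty X]
    (hreg : RegularSpace X) (ht1 : T1Space X) (hq : QuasiLindelofSp X)
    {B : Set (Set X)} (hBb : TopologicalSpace.IsTopologicalBasis B) :
    Dense (⋃ t, stage B t) := by
  set D := ⋃ t, stage B t with hDdef
  intro x
  by_contra hx
  set U := (closure D)ᶜ with hUdef
  have hUopen : IsOpen U := isClosed_closure.isOpen_compl
  have hxU : x ∈ U := hx
  set 𝒰 := {W | W ∈ B ∧ (x ∉ closure W ∨ (x ∈ W ∧ W ⊆ U))} with h𝒰def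
  have hcov : ⋃₀ 𝒰 = Set.univ := by
    apply Set.eq_univ_of_forall
    intro y
    by_cases hxy : y = x
    · subst hxy
      obtain ⟨W, hWB, hyW, hWU⟩ := hBb.exists_subset_of_mem_open hxU hUopen
      exact ⟨W, ⟨hWB, Or.inr ⟨hyW, hWU⟩⟩, hyW⟩
    · obtain ⟨O, hOopen, hyO, hxO⟩ := sep_point hxy
      obtain ⟨W, hWB, hyW, hWO⟩ := hBb.exists_subset_of_mem_open hyO hOopen
      exact ⟨W, ⟨hWB, Or.inl fun hc => hxO (closure_mono hWO hc)⟩, hyW⟩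
  obtain ⟨𝒱, h𝒱𝒰, h𝒱c, h𝒱cov⟩ := hq 𝒰 (fun W hW => hBb.isOpen hW.1) hcov
  set C := {W ∈ 𝒱 | (W ∩ D).Nonempty} with hCdef
  have hCB : C ⊆ B := fun W hW => (h𝒱𝒰 hW.1).1
  have hCc : C.Countable := h𝒱c.mono (Set.sep_subset _ _)
  have hCD : D ⊆ ⋃₀ C := by
    intro d hd
    have hd𝒱 : d ∈ ⋃₀ 𝒱 := h𝒱cov ▸ Set.mem_univ d
    obtain ⟨W, hW𝒱, hdW⟩ := hd𝒱
    exact ⟨W, ⟨hW𝒱, ⟨d, hdW, hd⟩⟩, hdW⟩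
  have hxC : x ∉ ⋃₀ C := by
    rintro ⟨W, hWC, hxW⟩
    rcases (h𝒱𝒰 hWC.1).2 with h1 | h2
    · exact h1 (subset_closure hxW)
    · obtain ⟨d, hdW, hdD⟩ := hWC.2
      exact h2.2 hdW (subset_closure hdD)
  have hCne : ⋃₀ C ≠ Set.univ := fun hEq => hxC (hEq ▸ Set.mem_univ x)
  have hst : ∀ W : C, ∃ t, ((W : Set X) ∩ stage B t).Nonempty := by
    rintro ⟨W, hW⟩
    obtain ⟨d, hdW, hdD⟩ := hW.2
    obtain ⟨t, hdt⟩ := Set.mem_iUnion.1 hdD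
    exact ⟨t, d, hdW, hdt⟩
  choose f hf using hst
  haveI : Countable C := hCc.to_subtype
  obtain ⟨t0, ht0⟩ := exists_ub (Set.countable_range f)
  have hbadmem : C ∈ bad B (⋃ s : {s // s < t0}, stage B s.1) := by
    refine ⟨hCB, hCc, ?_, hCne⟩
    intro W hW
    obtain ⟨d, hdW, hdt⟩ := hf ⟨W, hW⟩
    exact ⟨d, hdW, Set.mem_iUnion.2 ⟨⟨f ⟨W, hW⟩, ht0 _ (Set.mem_range_self _)⟩, hdt⟩⟩
  have hwit1 : wit C ∈ stage B t0 := by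
    rw [stage_eq]
    exact Set.mem_union_right _ (Set.mem_image_of_mem _ hbadmem)
  exact wit_not_mem hCne (hCD (Set.mem_iUnion.2 ⟨t0, hwit1⟩))

end Stmt17Aux

/-- Every Lindelöf space with a point-𝔠 base has weight at most 𝔠. -/
theorem stmt17 (X : Type u) [TopologicalSpace X] (hL : EngLindelofSp X)
    (hbase : ∃ B : Set (Set X), TopologicalSpace.IsTopologicalBasis B ∧
      PointLE B Cardinal.continuum) :
    WeightLE X Cardinal.continuum := by
  classical
  cases isEmpty_or_nonempty X with
  | inl h =>
    refine ⟨∅, ?_, by simp⟩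
    refine TopologicalSpace.isTopologicalBasis_of_isOpen_of_nhds (by simp) ?_
    intro x
    exact (h.false x).elim
  | inr h =>
    obtain ⟨B, hBb, hBp⟩ := hbase
    obtain ⟨hreg, ht1, hq⟩ := hL
    haveI := hreg; haveI := ht1
    set D := ⋃ t, Stmt17Aux.stage B t with hDdef
    have hDc : #D ≤ 𝔠 := by
      refine (Stmt17Aux.mk_iUnion_le'' (fun t => Stmt17Aux.stage B t)
        (fun t => Stmt17Aux.mk_stage_le hBp t)).trans ?_
      have hT : #((ℵ₁ : Cardinal.{u}).ord.ToType) ≤ 𝔠 := by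
        rw [Cardinal.mk_toType, Cardinal.card_ord]
        exact Cardinal.aleph_one_le_continuum
      calc #((ℵ₁ : Cardinal.{u}).ord.ToType) * 𝔠 ≤ 𝔠 * 𝔠 := mul_le_mul_left hT _
        _ = 𝔠 := Cardinal.mul_eq_self Cardinal.aleph0_le_continuum
    have hdense : Dense D := Stmt17Aux.dense_stages hreg ht1 hq hBb
    refine ⟨{W ∈ B | (W ∩ D).Nonempty}, ?_, Stmt17Aux.mk_meets_le hBp hDc⟩
    refine TopologicalSpace.isTopologicalBasis_of_isOpen_of_nhds
      (fun W hW => hBb.isOpen hW.1) ?_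
    intro x U hxU hU
    obtain ⟨W, hWB, hxW, hWU⟩ := hBb.exists_subset_of_mem_open hxU hU
    exact ⟨W, ⟨hWB, hdense.inter_open_nonempty W (hBb.isOpen hWB) ⟨x, hxW⟩⟩, hxW, hWU⟩
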